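/- Let f = Σ_{i=0}^d f_i X^{q^i} ∈ F[X] be a q-linearized polynomial with f₀ ≠ 0, f_d ≠ 0 and d ≥ 1 (so f is separable of degree q^d). Then f has a nonzero root in F̄, and the maximum of ν(β) over all nonzero roots β of f in F̄ equals −min{(ν(f_i) − ν(f₀))/(q^i − 1) : 1 ≤ i ≤ d, f_i ≠ 0}. -/

import Mathlib

open Polynomial

section Helpers

variable {A : Type*} [Field A] (ν : A → ℚ)
  (hmul : ∀ x y : A, x ≠ 0 → y ≠ 0 → ν (x * y) = ν x + ν y)
  (hadd : ∀ x y : A, x ≠ 0 → y ≠ 0 → x + y ≠ 0 → min (ν x) (ν y) ≤ ν (x + y))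

include hmul

lemma nu_one' : ν 1 = 0 := by
  have := hmul 1 1 one_ne_zero one_ne_zero
  simp at this; linarith

lemma nu_neg_one' : ν (-1) = 0 := by
  have := hmul (-1) (-1) (by norm_num) (by norm_num)
  simp at this
  have h1 := nu_one' ν hmul
  linarith

lemma nu_neg' (x : A) (hx : x ≠ 0) : ν (-x) = ν x := by
  have := hmul (-1) x (by norm_num) hx
  rw [neg_one_mul] at this
  rw [this, nu_neg_one' ν hmul]; ring

lemma nu_pow' (x : A) (hx : x ≠ 0) (n : ℕ) : ν (x ^ n) = n * ν x := by
  induction n with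
  | zero => simpa using nu_one' ν hmul
  | succ k ih =>
    rw [pow_succ, hmul _ _ (pow_ne_zero _ hx) hx, ih]
    push_cast; ring

lemma nu_mprod' (s : Multiset A) (h : ∀ x ∈ s, x ≠ 0) :
    s.prod ≠ 0 ∧ ν s.prod = (s.map ν).sum := by
  induction s using Multiset.induction with
  | empty => simpa using nu_one' ν hmul
  | cons a s ih =>
    have ha : a ≠ 0 := h a (Multiset.mem_cons_self a s)
    have ihs := ih (fun x hx => h x (Multiset.mem_cons_of_mem hx))
    rw [Multiset.prod_cons, Multiset.map_cons, Multiset.sum_cons]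
    exact ⟨mul_ne_zero ha ihs.1, by rw [hmul _ _ ha ihs.1, ihs.2]⟩

include hadd

omit hmul in
lemma nu_msum' (c : ℚ) (s : Multiset A) (h : ∀ x ∈ s, x ≠ 0 → c ≤ ν x) :
    s.sum = 0 ∨ c ≤ ν s.sum := by
  induction s using Multiset.induction with
  | empty => left; simp
  | cons a s ih =>
    have ihs := ih (fun x hx => h x (Multiset.mem_cons_of_mem hx))
    rw [Multiset.sum_cons]
    by_cases ha : a = 0
    · simpa [ha] using ihs
    · have hca : c ≤ ν a := h a (Multiset.mem_cons_self a s) ha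
      rcases ihs with h0 | hle
      · right; simpa [h0] using hca
      · by_cases hs0 : s.sum = 0
        · right; simpa [hs0] using hca
        · by_cases hsum : a + s.sum = 0
          · left; exact hsum
          · right
            exact le_trans (le_min hca hle) (hadd _ _ ha hs0 hsum)

omit hmul in
lemma nu_fsum_strict' {ι : Type*} (c : ℚ) (s : Finset ι) (g : ι → A)
    (h : ∀ i ∈ s, g i ≠ 0 → c < ν (g i)) :
    (∑ i ∈ s, g i) = 0 ∨ c < ν (∑ i ∈ s, g i) := by
  classical
  induction s using Finset.induction with
  | empty => left; simp
  | @insert a s hnotmem ih =>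
    have ihs := ih (fun x hx => h x (Finset.mem_insert_of_mem hx))
    rw [Finset.sum_insert hnotmem]
    by_cases ha : g a = 0
    · simpa [ha] using ihs
    · have hca : c < ν (g a) := h a (Finset.mem_insert_self a s) ha
      rcases ihs with h0 | hle
      · right; simpa [h0] using hca
      · by_cases hs0 : (∑ i ∈ s, g i) = 0
        · right; simpa [hs0] using hca
        · by_cases hsum : g a + ∑ i ∈ s, g i = 0
          · left; exact hsum
          · right
            exact lt_of_lt_of_le (lt_min hca hle) (hadd _ _ ha hs0 hsum)

omit hmul hadd in
lemma powersetCard_card_self' {α : Type*} (s : Multiset α) :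
    s.powersetCard (Multiset.card s) = {s} := by
  have h1 : Multiset.card (s.powersetCard (Multiset.card s)) = 1 := by
    rw [Multiset.card_powersetCard, Nat.choose_self]
  obtain ⟨a, ha⟩ := Multiset.card_eq_one.mp h1
  have h2 : s ∈ s.powersetCard (Multiset.card s) :=
    Multiset.mem_powersetCard.mpr ⟨le_rfl, rfl⟩
  rw [ha] at h2 ⊢
  rw [Multiset.mem_singleton] at h2
  rw [h2]

end Helpers

/-- A polynomial is `q`-linearized if it is of the form `Σ fᵢ X^(qⁱ)`. -/
def IsqLin {F : Type*} [Field F] (q : ℕ) (f : Polynomial F) : Prop :=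
  ∀ n, f.coeff n ≠ 0 → ∃ i : ℕ, n = q ^ i

theorem stmt7 {Fq F : Type*} [Field Fq] [Fintype Fq] [Field F] [Algebra Fq F]
    (q : ℕ) (hq : q = Fintype.card Fq)
    (ν : AlgebraicClosure F → ℚ)
    (hmul : ∀ x y : AlgebraicClosure F, x ≠ 0 → y ≠ 0 → ν (x * y) = ν x + ν y)
    (hadd : ∀ x y : AlgebraicClosure F, x ≠ 0 → y ≠ 0 → x + y ≠ 0 →
      min (ν x) (ν y) ≤ ν (x + y))
    (f : Polynomial F) (hf : IsqLin q f) (d : ℕ) (hd : 1 ≤ d)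
    (hf0 : f.coeff 1 ≠ 0) (hfd : f.coeff (q ^ d) ≠ 0) (hdeg : f.natDegree = q ^ d) :
    (∃ β : AlgebraicClosure F, Polynomial.aeval β f = 0 ∧ β ≠ 0) ∧
      IsGreatest
        {y : ℝ | ∃ β : AlgebraicClosure F,
          Polynomial.aeval β f = 0 ∧ β ≠ 0 ∧ y = (ν β : ℝ)}
        (- sInf {y : ℝ | ∃ i : ℕ, 1 ≤ i ∧ i ≤ d ∧ f.coeff (q ^ i) ≠ 0 ∧
          y = ((ν (algebraMap F (AlgebraicClosure F) (f.coeff (q ^ i))) : ℝ) -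
                (ν (algebraMap F (AlgebraicClosure F) (f.coeff 1)) : ℝ)) /
              ((q : ℝ) ^ i - 1)}) := by
  classical
  set φ : F →+* AlgebraicClosure F := algebraMap F (AlgebraicClosure F) with hφdef
  have hq2 : 2 ≤ q := by rw [hq]; exact Fintype.one_lt_card
  have hq0 : 0 < q := by omega
  have hq1 : (1:ℚ) < (q:ℚ) := by exact_mod_cast hq2
  have hφ : Function.Injective φ := φ.injective
  have hφne : ∀ a : F, a ≠ 0 → φ a ≠ 0 := fun a ha h =>
    ha (hφ (by simpa using h))
  set c : ℕ → ℚ := fun i =>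
    (ν (φ (f.coeff (q ^ i))) - ν (φ (f.coeff 1))) / ((q:ℚ) ^ i - 1) with hcdef
  set S : Finset ℕ := (Finset.Icc 1 d).filter (fun i => f.coeff (q ^ i) ≠ 0) with hSdef
  have hdS : d ∈ S := Finset.mem_filter.mpr ⟨Finset.mem_Icc.mpr ⟨hd, le_rfl⟩, hfd⟩
  have hSne : S.Nonempty := ⟨d, hdS⟩
  set m : ℚ := S.inf' hSne c with hmdef
  have hqpow_pos : ∀ i : ℕ, 1 ≤ i → (0:ℚ) < (q:ℚ)^i - 1 := by
    intro i hi
    have : (1:ℚ) < (q:ℚ)^i := one_lt_pow₀ hq1 (by omega)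
    linarith
  -- Part (a): every nonzero root has valuation ≤ -m
  have ha : ∀ β : AlgebraicClosure F, aeval β f = 0 → β ≠ 0 → ν β ≤ -m := by
    intro β hroot hβ
    by_contra hcon
    push_neg at hcon
    have hexp : ∑ i ∈ Finset.range (d+1), φ (f.coeff (q^i)) * β ^ (q^i) = 0 := by
      have h2 : ∑ n ∈ Finset.range (q^d + 1), φ (f.coeff n) * β ^ n = 0 := by
        rw [← hroot, Polynomial.aeval_eq_sum_range, hdeg]
        exact Finset.sum_congr rfl fun n _ => (Algebra.smul_def _ _).symm
      have hsub : (Finset.range (d+1)).image (q ^ ·) ⊆ Finset.range (q^d + 1) := by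
        intro n hn
        obtain ⟨i, hi, rfl⟩ := Finset.mem_image.mp hn
        have : q^i ≤ q^d := Nat.pow_le_pow_right hq0 (by
          simpa using Nat.lt_succ_iff.mp (Finset.mem_range.mp hi))
        exact Finset.mem_range.mpr (by omega)
      have hzero : ∀ n ∈ Finset.range (q^d + 1),
          n ∉ (Finset.range (d+1)).image (q ^ ·) → φ (f.coeff n) * β ^ n = 0 := by
        intro n hn hnT
        by_cases h0 : f.coeff n = 0
        · simp [h0]
        · obtain ⟨i, rfl⟩ := hf n h0
          have h1 : q^i ≤ q^d := Nat.lt_succ_iff.mp (Finset.mem_range.mp hn)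
          have h2 : i ≤ d := (Nat.pow_le_pow_iff_right hq2).mp h1
          exact absurd (Finset.mem_image.mpr ⟨i, Finset.mem_range.mpr (by omega), rfl⟩) hnT
      have himg : ∑ n ∈ (Finset.range (d+1)).image (q ^ ·), φ (f.coeff n) * β ^ n = 0 := by
        rw [Finset.sum_subset hsub hzero]; exact h2
      rw [← himg]
      rw [Finset.sum_image (fun x _ y _ h => Nat.pow_right_injective hq2 h)]
    have hsplit : φ (f.coeff 1) * β = - ∑ i ∈ Finset.Icc 1 d, φ (f.coeff (q^i)) * β ^ (q^i) := by
      rw [Finset.range_eq_Ico, Finset.sum_eq_sum_Ico_succ_bot (Nat.succ_pos d)] at hexp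
      rw [Nat.succ_eq_add_one, Finset.Ico_add_one_right_eq_Icc] at hexp
      simp only [pow_zero, pow_one] at hexp
      exact eq_neg_of_add_eq_zero_left hexp
    have ht0ne : φ (f.coeff 1) * β ≠ 0 := mul_ne_zero (hφne _ hf0) hβ
    have hterms : ∀ i ∈ Finset.Icc 1 d, φ (f.coeff (q^i)) * β ^ (q^i) ≠ 0 →
        ν (φ (f.coeff 1) * β) < ν (φ (f.coeff (q^i)) * β ^ (q^i)) := by
      intro i hi hne
      have hfi : f.coeff (q^i) ≠ 0 := fun h => hne (by simp [h])
      have hiS : i ∈ S := Finset.mem_filter.mpr ⟨hi, hfi⟩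
      have hmle : m ≤ c i := Finset.inf'_le c hiS
      have h1 : 1 ≤ i := (Finset.mem_Icc.mp hi).1
      have hpos : (0:ℚ) < (q:ℚ)^i - 1 := hqpow_pos i h1
      have hβi : -c i < ν β := lt_of_le_of_lt (by linarith) hcon
      have hterm : ν (φ (f.coeff (q^i)) * β ^ (q^i))
          = ν (φ (f.coeff (q^i))) + (q:ℚ)^i * ν β := by
        rw [hmul _ _ (hφne _ hfi) (pow_ne_zero _ hβ), nu_pow' ν hmul β hβ]
        push_cast; ring
      have ht0v : ν (φ (f.coeff 1) * β) = ν (φ (f.coeff 1)) + ν β :=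
        hmul _ _ (hφne _ hf0) hβ
      rw [hterm, ht0v]
      have hnum : ν (φ (f.coeff 1)) - ν (φ (f.coeff (q^i))) < ((q:ℚ)^i - 1) * ν β := by
        have hci : c i = (ν (φ (f.coeff (q^i))) - ν (φ (f.coeff 1))) / ((q:ℚ)^i - 1) := rfl
        rw [hci] at hβi
        rw [← neg_div] at hβi
        have := (div_lt_iff₀ hpos).mp hβi
        linarith [this]
      linarith [hnum]
    rcases nu_fsum_strict' ν hadd (ν (φ (f.coeff 1) * β)) (Finset.Icc 1 d)
        (fun i => φ (f.coeff (q^i)) * β ^ (q^i)) hterms with h0 | hlt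
    · rw [h0, neg_zero] at hsplit; exact ht0ne hsplit
    · have hs : (∑ i ∈ Finset.Icc 1 d, φ (f.coeff (q^i)) * β ^ (q^i))
          = -(φ (f.coeff 1) * β) := by rw [hsplit, neg_neg]
      rw [hs, nu_neg' ν hmul _ ht0ne] at hlt
      exact lt_irrefl _ hlt
  -- Part (b): setup the polynomial gA = fA / X over the algebraic closure
  set fA : Polynomial (AlgebraicClosure F) := f.map φ with hfAdef
  have hfc0 : f.coeff 0 = 0 := by
    by_contra h
    obtain ⟨i, hi⟩ := hf 0 h
    have : 0 < q ^ i := pow_pos hq0 i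
    omega
  set gA : Polynomial (AlgebraicClosure F) := fA.divX with hgAdef
  have hgc : ∀ j, gA.coeff j = φ (f.coeff (j+1)) := fun j => by
    rw [hgAdef, Polynomial.coeff_divX, hfAdef, Polynomial.coeff_map]
  have hqd1 : 1 ≤ q ^ d := Nat.one_le_pow d q hq0
  have hfAdeg : fA.natDegree = q^d := by
    rw [hfAdef, Polynomial.natDegree_map_eq_of_injective hφ, hdeg]
  have hgne : gA ≠ 0 := by
    intro h
    have := hgc 0
    rw [h] at this
    simp only [Polynomial.coeff_zero] at this
    exact hφne _ hf0 this.symm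
  have hXg : fA = X * gA := by
    have h := Polynomial.X_mul_divX_add fA
    have h0 : fA.coeff 0 = 0 := by rw [hfAdef, Polynomial.coeff_map, hfc0, map_zero]
    rw [h0, map_zero, add_zero] at h
    exact h.symm
  have hNdeg : gA.natDegree = q^d - 1 := by
    rw [hgAdef, Polynomial.natDegree_divX_eq_natDegree_tsub_one, hfAdeg]
  have hlc : gA.leadingCoeff = φ (f.coeff (q^d)) := by
    rw [Polynomial.leadingCoeff, hNdeg, hgc, Nat.sub_add_cancel hqd1]
  set R := gA.roots with hRdef
  have hcardN : Multiset.card R = gA.natDegree :=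
    Polynomial.splits_iff_card_roots.mp (IsAlgClosed.splits gA)
  have hcard : Multiset.card R = q^d - 1 := by rw [hcardN, hNdeg]
  have hRnz : ∀ x ∈ R, x ≠ 0 := by
    intro x hx h0
    subst h0
    have h1 : gA.IsRoot 0 := (Polynomial.mem_roots'.mp hx).2
    rw [Polynomial.IsRoot, ← Polynomial.coeff_zero_eq_eval_zero, hgc 0] at h1
    exact hφne _ hf0 h1
  have hroot : ∀ x ∈ R, aeval x f = 0 := by
    intro x hx
    have h1 : gA.eval x = 0 := (Polynomial.mem_roots'.mp hx).2
    rw [Polynomial.aeval_def, ← Polynomial.eval_map, ← hfAdef, hXg]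
    simp [h1]
  have hRne : R.toFinset.Nonempty := by
    have hpos : 0 < Multiset.card R := by
      rw [hcard]
      have h2d : q ^ 1 ≤ q ^ d := Nat.pow_le_pow_right hq0 hd
      rw [pow_one] at h2d
      omega
    rcases Multiset.card_pos_iff_exists_mem.mp hpos with ⟨x, hx⟩
    exact ⟨x, Multiset.mem_toFinset.mpr hx⟩
  obtain ⟨β₀, hβ₀t, hβ₀max'⟩ := Finset.exists_max_image R.toFinset ν hRne
  have hβ₀R : β₀ ∈ R := Multiset.mem_toFinset.mp hβ₀t
  have hβ₀max : ∀ x ∈ R, ν x ≤ ν β₀ := fun x hx => hβ₀max' x (Multiset.mem_toFinset.mpr hx)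
  -- the minimizing index
  obtain ⟨i₀, hi₀S, hmeq⟩ := Finset.exists_mem_eq_inf' hSne c
  have hmeq' : m = c i₀ := hmdef.trans hmeq
  have hi₀1 : 1 ≤ i₀ := (Finset.mem_Icc.mp (Finset.mem_filter.mp hi₀S).1).1
  have hi₀d : i₀ ≤ d := (Finset.mem_Icc.mp (Finset.mem_filter.mp hi₀S).1).2
  have hfi₀ : f.coeff (q^i₀) ≠ 0 := (Finset.mem_filter.mp hi₀S).2
  have hqi₀1 : 1 ≤ q ^ i₀ := Nat.one_le_pow i₀ q hq0
  have hk_le_N : q^i₀ - 1 ≤ q^d - 1 :=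
    Nat.sub_le_sub_right (Nat.pow_le_pow_right hq0 hi₀d) 1
  have hlcne : gA.leadingCoeff ≠ 0 := Polynomial.leadingCoeff_ne_zero.mpr hgne
  have hsign : ∀ e : ℕ, ν ((-1 : AlgebraicClosure F)^e) = 0 := fun e => by
    rw [nu_pow' ν hmul _ (by norm_num), nu_neg_one' ν hmul]; ring
  -- coefficient formulas via Vieta
  have hc0 : φ (f.coeff 1) = gA.leadingCoeff * (-1)^(q^d - 1) * R.esymm (q^d - 1) := by
    have h := Polynomial.coeff_eq_esymm_roots_of_card hcardN (k := 0) (Nat.zero_le _)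
    rw [hgc 0, Nat.sub_zero, hNdeg] at h
    exact h
  have hck : φ (f.coeff (q^i₀)) = gA.leadingCoeff * (-1)^((q^d - 1) - (q^i₀ - 1)) *
      R.esymm ((q^d - 1) - (q^i₀ - 1)) := by
    have hkle : q^i₀ - 1 ≤ gA.natDegree := by rw [hNdeg]; exact hk_le_N
    have h := Polynomial.coeff_eq_esymm_roots_of_card hcardN hkle
    rw [hgc (q^i₀ - 1), Nat.sub_add_cancel hqi₀1, hNdeg] at h
    exact h
  have hesymmN : R.esymm (q^d - 1) = R.prod := by
    rw [Multiset.esymm, ← hcard, powersetCard_card_self']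
    simp
  have hprod := nu_mprod' ν hmul R hRnz
  have hE0 : ν (φ (f.coeff 1)) = ν gA.leadingCoeff + (R.map ν).sum := by
    rw [hc0, hesymmN,
      hmul _ _ (mul_ne_zero hlcne (pow_ne_zero _ (by norm_num))) hprod.1,
      hmul _ _ hlcne (pow_ne_zero _ (by norm_num)), hsign, hprod.2]
    ring
  have hesne : R.esymm ((q^d - 1) - (q^i₀ - 1)) ≠ 0 := by
    intro h
    rw [h, mul_zero] at hck
    exact hφne _ hfi₀ hck
  -- lower bound on the valuation of the elementary symmetric function
  have hbound : (R.map ν).sum - ((q^i₀ - 1 : ℕ) : ℚ) * ν β₀ ≤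
      ν (R.esymm ((q^d - 1) - (q^i₀ - 1))) := by
    have hterms : ∀ x ∈ (R.powersetCard ((q^d - 1) - (q^i₀ - 1))).map Multiset.prod,
        x ≠ 0 → (R.map ν).sum - ((q^i₀ - 1 : ℕ) : ℚ) * ν β₀ ≤ ν x := by
      intro x hx _
      obtain ⟨T, hT, rfl⟩ := Multiset.mem_map.mp hx
      obtain ⟨hTle, hTcard⟩ := Multiset.mem_powersetCard.mp hT
      have hTnz : ∀ y ∈ T, y ≠ 0 := fun y hy => hRnz y (Multiset.mem_of_le hTle hy)
      have hTprod := nu_mprod' ν hmul T hTnz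
      rw [hTprod.2]
      have hsplitR : (R - T) + T = R := tsub_add_cancel_of_le hTle
      have hRsum : (R.map ν).sum = ((R - T).map ν).sum + (T.map ν).sum := by
        conv_lhs => rw [← hsplitR]
        rw [Multiset.map_add, Multiset.sum_add]
      have hcardRT : Multiset.card (R - T) = q^i₀ - 1 := by
        rw [Multiset.card_sub hTle, hTcard, hcard]
        exact Nat.sub_sub_self hk_le_N
      have hsum_le : ((R - T).map ν).sum ≤ ((q^i₀ - 1 : ℕ) : ℚ) * ν β₀ := by
        have hb := Multiset.sum_le_card_nsmul ((R - T).map ν) (ν β₀) ?_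
        · rw [Multiset.card_map, hcardRT] at hb
          simpa [nsmul_eq_mul] using hb
        · intro y hy
          obtain ⟨z, hz, rfl⟩ := Multiset.mem_map.mp hy
          exact hβ₀max z (Multiset.mem_of_le tsub_le_self hz)
      linarith [hRsum, hsum_le]
    rcases nu_msum' ν hadd _ ((R.powersetCard ((q^d - 1) - (q^i₀ - 1))).map Multiset.prod)
        hterms with h0 | hle
    · exact absurd h0 hesne
    · exact hle
  have hEk : ν (φ (f.coeff (q^i₀))) = ν gA.leadingCoeff +
      ν (R.esymm ((q^d - 1) - (q^i₀ - 1))) := by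
    rw [hck,
      hmul _ _ (mul_ne_zero hlcne (pow_ne_zero _ (by norm_num))) hesne,
      hmul _ _ hlcne (pow_ne_zero _ (by norm_num)), hsign]
    ring
  have hkQ : ((q^i₀ - 1 : ℕ) : ℚ) = (q:ℚ)^i₀ - 1 := by
    push_cast [Nat.cast_sub hqi₀1]
    ring
  have hkpos : (0:ℚ) < ((q^i₀ - 1 : ℕ) : ℚ) := by rw [hkQ]; exact hqpow_pos i₀ hi₀1
  have hb : -m ≤ ν β₀ := by
    have h1 : ν (φ (f.coeff 1)) - ((q^i₀ - 1 : ℕ) : ℚ) * ν β₀ ≤ ν (φ (f.coeff (q^i₀))) := by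
      rw [hEk, hE0]; linarith [hbound]
    have h3 : ((q:ℚ)^i₀ - 1) * c i₀ = ν (φ (f.coeff (q^i₀))) - ν (φ (f.coeff 1)) := by
      have hci : c i₀ = (ν (φ (f.coeff (q^i₀))) - ν (φ (f.coeff 1))) / ((q:ℚ)^i₀ - 1) := rfl
      rw [hci, mul_div_cancel₀]
      exact ne_of_gt (hqpow_pos i₀ hi₀1)
    rw [hmeq']
    have h4 : ((q^i₀ - 1 : ℕ) : ℚ) * (-c i₀) ≤ ((q^i₀ - 1 : ℕ) : ℚ) * ν β₀ := by
      rw [hkQ]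
      rw [hkQ] at h1
      nlinarith [h1, h3]
    exact le_of_mul_le_mul_left h4 hkpos
  have hβ₀f : aeval β₀ f = 0 := hroot β₀ hβ₀R
  have hβ₀ne : β₀ ≠ 0 := hRnz β₀ hβ₀R
  have hβ₀val : ν β₀ = -m := le_antisymm (ha β₀ hβ₀f hβ₀ne) hb
  -- the infimum computation
  have hsInf : sInf {y : ℝ | ∃ i : ℕ, 1 ≤ i ∧ i ≤ d ∧ f.coeff (q ^ i) ≠ 0 ∧
      y = ((ν (φ (f.coeff (q ^ i))) : ℝ) - (ν (φ (f.coeff 1)) : ℝ)) /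
        ((q : ℝ) ^ i - 1)} = (m : ℝ) := by
    have hcast : ∀ i : ℕ, ((c i : ℚ) : ℝ) =
        ((ν (φ (f.coeff (q ^ i))) : ℝ) - (ν (φ (f.coeff 1)) : ℝ)) / ((q : ℝ) ^ i - 1) := by
      intro i
      rw [hcdef]
      push_cast
      ring
    apply IsLeast.csInf_eq
    constructor
    · exact ⟨i₀, hi₀1, hi₀d, hfi₀, by rw [← hcast i₀, hmeq']⟩
    · rintro y ⟨i, h1, h2, h3, rfl⟩
      have hiS : i ∈ S := Finset.mem_filter.mpr ⟨Finset.mem_Icc.mpr ⟨h1, h2⟩, h3⟩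
      have hle : m ≤ c i := Finset.inf'_le c hiS
      rw [← hcast i]
      exact_mod_cast hle
  refine ⟨⟨β₀, hβ₀f, hβ₀ne⟩, ⟨β₀, hβ₀f, hβ₀ne, ?_⟩, ?_⟩
  · rw [hsInf, hβ₀val]
    push_cast
    ring
  · rintro y ⟨β, h1, h2, rfl⟩
    rw [hsInf]
    have h4 := ha β h1 h2
    have h5 : (ν β : ℝ) ≤ ((-m : ℚ) : ℝ) := by exact_mod_cast h4
    push_cast at h5
    linarith
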